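/- Let S(x,q) be a generating function on ℝ^m × (ℝ^n)^* and Φ_S^* the associated thick-morphism pull-back. Then for every g ∈ C^∞(ℝ^n) the components of the formal functional Φ_S^*(g) of order ≤ 3 are: [Φ_S^*(g)]_0 = S_0(x); [Φ_S^*(g)]_1 = g(S_1(x)); [Φ_S^*(g)]_2 = S_2^{ab}(x) g*_a(x) g*_b(x); and [Φ_S^*(g)]_3 = S_3^{abc}(x) g*_a(x) g*_b(x) g*_c(x) + 2 S_2^{ac}(x) S_2^{bd}(x) g*_{ab}(x) g*_c(x) g*_d(x), where g*_a(x) = (∂g/∂y^a)(S_1(x)) and g*_{ab}(x) = (∂²g/∂y^a∂y^b)(S_1(x)). -/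

import Mathlib

open scoped BigOperators

namespace ThickMorphism

/-- Real-valued functions on `ℝ^n` (the ambient space of `C^∞(ℝ^n)`). -/
abbrev Fn (n : ℕ) : Type := (Fin n → ℝ) → ℝ

/-- `ℝ^n`-valued functions on `ℝ^m`. -/
abbrev VFn (m n : ℕ) : Type := (Fin m → ℝ) → Fin n → ℝ

/-- `f` is a smooth (`C^∞`) function on `ℝ^n`. -/
def Sm {n : ℕ} (f : Fn n) : Prop := ContDiff ℝ (⊤ : ℕ∞) f

/-- `f` is a smooth (`C^∞`) map from `ℝ^m` to `ℝ^n`. -/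
def SmV {m n : ℕ} (f : VFn m n) : Prop := ContDiff ℝ (⊤ : ℕ∞) f

/-- The partial derivative `∂_b g`. -/
noncomputable def pd {n : ℕ} (b : Fin n) (g : Fn n) : Fn n :=
  fun y => fderiv ℝ g y (Pi.single b 1)

/-- The `a`-th coordinate function `y^a` on `ℝ^n`. -/
def coordFn {n : ℕ} (a : Fin n) : Fn n := fun y => y a

/-- Ordered tuples of `j` positive parts summing to `k` (parts coded in `Fin (k+1)`). -/
def parts (j k : ℕ) : Finset (Fin j → Fin (k + 1)) :=
  Finset.univ.filter fun t => (∑ i, (t i : ℕ)) = k ∧ ∀ i, 0 < (t i : ℕ)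

/-- Order-`k` component of the Taylor expansion (at `Y 0`) of `h ∘ Y`,
where `Y r` is the order-`r` component of a formal map with values in `ℝ^n`:
`Σ_{j} Σ_{r_1+⋯+r_j = k, r_i ≥ 1} (1/j!) ∂^j h (Y 0 x) (Y_{r_1}(x),…,Y_{r_j}(x))`. -/
noncomputable def taylorComp {m n : ℕ} (h : Fn n) (Y : ℕ → VFn m n) (k : ℕ) : Fn m :=
  fun x => ∑ j ∈ Finset.range (k + 1), ∑ t ∈ parts j k,
    ((Nat.factorial j : ℝ))⁻¹ * iteratedFDeriv ℝ j h (Y 0 x) (fun i => Y (t i : ℕ) x)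

/-- A formal functional from `C^∞(ℝ^n)` to `C^∞(ℝ^m)`: a sequence of symmetric
`k`-linear maps `B k` (the polarised forms), preserving smoothness; the order-`k`
component of the functional is the diagonal restriction `g ↦ B k (g,…,g)`. -/
structure FormalFunctional (n m : ℕ) where
  B : (k : ℕ) → MultilinearMap ℝ (fun _ : Fin k => Fn n) (Fn m)
  symm : ∀ (k : ℕ) (σ : Equiv.Perm (Fin k)) (v : Fin k → Fn n), B k (v ∘ σ) = B k v
  smooth : ∀ (k : ℕ) (v : Fin k → Fn n), (∀ i, Sm (v i)) → Sm (B k v)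

/-- The order-`k` component `L_k(g)` of a formal functional. -/
def FormalFunctional.ord {n m : ℕ} (L : FormalFunctional n m) (k : ℕ) (g : Fn n) : Fn m :=
  L.B k (fun _ => g)

/-- A formal map over `C^∞(ℝ^n)` with values in `ℝ^n`-valued functions on `ℝ^m`:
a sequence of symmetric `r`-linear maps `K r`; the order-`r` component at `g`
is the diagonal restriction. -/
structure FormalMap (n m : ℕ) where
  K : (r : ℕ) → MultilinearMap ℝ (fun _ : Fin r => Fn n) (VFn m n)
  symm : ∀ (r : ℕ) (σ : Equiv.Perm (Fin r)) (v : Fin r → Fn n), K r (v ∘ σ) = K r v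
  smooth : ∀ (r : ℕ) (v : Fin r → Fn n), (∀ i, Sm (v i)) → SmV (K r v)

/-- The order-`r` component `K_r(g)` of a formal map. -/
def FormalMap.ord {n m : ℕ} (K : FormalMap n m) (r : ℕ) (g : Fn n) : VFn m n :=
  K.K r (fun _ => g)

/-- The support map `K₀` of a formal map. -/
def FormalMap.supp {n m : ℕ} (K : FormalMap n m) : VFn m n :=
  K.K 0 (fun i => i.elim0)

/-- `L` is a non-linear homomorphism with associated formal map `K`: for all smooth
`g, h` and all `k`, the order-`k`-in-`g` component of the differential of `L` at `g`
in direction `h`, namely `(k+1)·B_{k+1}(h,g,…,g)`, equals the order-`k` component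
of the formal (Taylor) composition `h(K(g))`. -/
def IsNonlinearHomWith {n m : ℕ} (L : FormalFunctional n m) (K : FormalMap n m) : Prop :=
  ∀ (g h : Fn n), Sm g → Sm h → ∀ k : ℕ,
    ((k : ℝ) + 1) • L.B (k + 1) (Fin.cons h (fun _ => g)) =
      taylorComp h (fun r => K.ord r g) k

/-- `L` is a non-linear homomorphism. -/
def IsNonlinearHom {n m : ℕ} (L : FormalFunctional n m) : Prop :=
  ∃ K : FormalMap n m, IsNonlinearHomWith L K

/-- A generating function `S(x,q) = Σ_k S_k^{a_1…a_k}(x) q_{a_1}⋯q_{a_k}` of a thick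
morphism `ℝ^m ⇛ ℝ^n`: smooth symmetric tensors `S k x : (Fin k → Fin n) → ℝ`. -/
structure GenFn (m n : ℕ) where
  S : (k : ℕ) → (Fin m → ℝ) → (Fin k → Fin n) → ℝ
  symm : ∀ (k : ℕ) (σ : Equiv.Perm (Fin k)) (x : Fin m → ℝ) (a : Fin k → Fin n),
    S k x (a ∘ σ) = S k x a
  smooth : ∀ (k : ℕ) (a : Fin k → Fin n), Sm (fun x => S k x a)

/-- The first-order coefficient `S_1` of a generating function, as a map `ℝ^m → ℝ^n`. -/
def sOne {m n : ℕ} (S : GenFn m n) : VFn m n := fun x a => S.S 1 x (fun _ => a)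

/-- Order-`t`-in-`g` component (`t ≥ 1`) of `q_b = (∂_b g)(y(x,g))`, the formal map `y`
having components `Y`: it is the Taylor-composition component of order `t-1`. -/
noncomputable def qComp {m n : ℕ} (g : Fn n) (Y : ℕ → VFn m n) (b : Fin n) (t : ℕ) : Fn m :=
  taylorComp (pd b g) Y (t - 1)

/-- Order-`N`-in-`g` component of `∂S(x,q)/∂q_a` evaluated at `q_b = (∂_b g)(y(x,g))`,
where `y` has components `Y`. -/
noncomputable def dSComp {m n : ℕ} (S : GenFn m n) (g : Fn n) (Y : ℕ → VFn m n) (N : ℕ) :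
    VFn m n :=
  fun x a => ∑ j ∈ Finset.range (N + 1), ∑ b : Fin j → Fin n, ∑ t ∈ parts j N,
    ((j : ℝ) + 1) * S.S (j + 1) x (Fin.cons a b) * ∏ i, qComp g Y (b i) (t i : ℕ) x

/-- Auxiliary recursion: `thickYAux S g k r` is the order-`r` component `y_r(x,g)` of the
formal map of the thick morphism `Φ_S` for `r ≤ k` (and `0` for `r > k`). -/
noncomputable def thickYAux {m n : ℕ} (S : GenFn m n) (g : Fn n) : ℕ → ℕ → VFn m n
  | 0 => fun r => if r = 0 then (fun x a => S.S 1 x (fun _ => a)) else 0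
  | k + 1 => fun r =>
      if r = k + 1 then dSComp S g (thickYAux S g k) (k + 1) else thickYAux S g k r

/-- The order-`k` component `y_k(x,g)` of the formal map of the thick morphism `Φ_S`:
`y_0 = S_1`, and `y_{k+1}` is the order-`(k+1)`-in-`g` component of `∂S/∂q_a` at
`q = (∂g)(y_{≤k}(x,g))`. -/
noncomputable def thickY {m n : ℕ} (S : GenFn m n) (g : Fn n) (k : ℕ) : VFn m n :=
  thickYAux S g k k

/-- Order-`k`-in-`g` component of `S(x,q)` evaluated at `q = (∂g)(y(x,g))`. -/
noncomputable def SqComp {m n : ℕ} (S : GenFn m n) (g : Fn n) (k : ℕ) : Fn m :=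
  fun x => ∑ j ∈ Finset.range (k + 1), ∑ b : Fin j → Fin n, ∑ t ∈ parts j k,
    S.S j x b * ∏ i, qComp g (thickY S g) (b i) (t i : ℕ) x

/-- Order-`k`-in-`g` component of `y^a q_a` at `y = y(x,g)`, `q = (∂g)(y(x,g))`. -/
noncomputable def yqComp {m n : ℕ} (S : GenFn m n) (g : Fn n) (k : ℕ) : Fn m :=
  fun x => ∑ a : Fin n, ∑ t ∈ Finset.Icc 1 k,
    thickY S g (k - t) x a * qComp g (thickY S g) a t x

/-- The order-`k`-in-`g` component of the thick-morphism pull-back `Φ_S^*(g)`, i.e. of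
`g(y) + S(x,q) − y^a q_a` at `y = y(x,g)`, `q = (∂g)(y(x,g))`, all compositions being
expanded by Taylor series at `y_0 = S_1(x)`. -/
noncomputable def thickPull {m n : ℕ} (S : GenFn m n) (g : Fn n) (k : ℕ) : Fn m :=
  fun x =>
    (if k = 0 then 0 else taylorComp g (thickY S g) (k - 1) x)
      + SqComp S g k x - yqComp S g k x

/-- The coordinate functions are smooth. -/
lemma coordFn_smooth {n : ℕ} (a : Fin n) : Sm (coordFn a) :=
  (ContinuousLinearMap.proj a : (Fin n → ℝ) →L[ℝ] ℝ).contDiff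

/-- The generating function `S_L` associated with a formal functional `L`:
`S_k^{a_1…a_k}(x) = B_k(y^{a_1},…,y^{a_k})(x)`, the polarised forms of `L`
evaluated on the coordinate functions of `ℝ^n`. -/
noncomputable def assocGen {n m : ℕ} (L : FormalFunctional n m) : GenFn m n where
  S := fun k x a => L.B k (fun i => coordFn (a i)) x
  symm := by
    intro k σ x a
    have h := L.symm k σ (fun i => coordFn (a i))
    exact congrFun h x
  smooth := fun k a => L.smooth k _ (fun i => coordFn_smooth (a i))

/-- Truncation of a generating function to degree `≤ k` in `q`. -/
noncomputable def truncGen {m n : ℕ} (S : GenFn m n) (k : ℕ) : GenFn m n where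
  S := fun i x a => if i ≤ k then S.S i x a else 0
  symm := by
    intro i σ x a
    by_cases h : i ≤ k <;> simp [h, S.symm]
  smooth := by
    intro i a
    by_cases h : i ≤ k
    · simpa [Sm, h] using S.smooth i a
    · simpa [Sm, h] using (contDiff_const : ContDiff ℝ (⊤ : ℕ∞) fun _ : Fin m → ℝ => (0 : ℝ))


/-! ### Auxiliary lemmas -/

section Aux

variable {m n : ℕ}

lemma clm_expand {F : Type*} [NormedAddCommGroup F] [NormedSpace ℝ F]
    (L : (Fin n → ℝ) →L[ℝ] F) (v : Fin n → ℝ) : L v = ∑ a, v a • L (Pi.single a 1) := by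
  conv_lhs => rw [← Finset.univ_sum_single v]
  rw [map_sum]
  refine Finset.sum_congr rfl fun a _ => ?_
  rw [← map_smul]
  congr 1
  funext j
  simp [Pi.single_apply]

lemma fderiv_expand (h : Fn n) (y v : Fin n → ℝ) :
    fderiv ℝ h y v = ∑ a, v a * pd a h y := by
  rw [clm_expand (fderiv ℝ h y) v]
  rfl

lemma fderiv_fderiv_single {h : Fn n} (hh : Sm h) (y : Fin n → ℝ) (a b : Fin n) :
    fderiv ℝ (fderiv ℝ h) y (Pi.single a 1) (Pi.single b 1) = pd a (pd b h) y := by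
  have hd : DifferentiableAt ℝ (fderiv ℝ h) y :=
    ((hh.fderiv_right (m := ((⊤:ℕ∞) : WithTop ℕ∞)) (by exact_mod_cast le_rfl)).differentiable (by simp)) y
  have hu : DifferentiableAt ℝ (fun _ : Fin n → ℝ => (Pi.single b 1 : Fin n → ℝ)) y :=
    differentiableAt_const _
  have := fderiv_clm_apply (c := fderiv ℝ h) (u := fun _ => (Pi.single b 1 : Fin n → ℝ)) hd hu
  have h2 : fderiv ℝ (fun z => fderiv ℝ h z (Pi.single b 1)) y (Pi.single a 1)
      = fderiv ℝ (fderiv ℝ h) y (Pi.single a 1) (Pi.single b 1) := by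
    rw [this]
    simp [fderiv_const]
  rw [← h2]
  rfl

lemma fderiv2_expand {h : Fn n} (hh : Sm h) (y v w : Fin n → ℝ) :
    fderiv ℝ (fderiv ℝ h) y v w = ∑ a, ∑ b, v a * w b * pd a (pd b h) y := by
  rw [clm_expand (fderiv ℝ (fderiv ℝ h) y) v, ContinuousLinearMap.sum_apply]
  refine Finset.sum_congr rfl fun a _ => ?_
  rw [ContinuousLinearMap.smul_apply, clm_expand (fderiv ℝ (fderiv ℝ h) y (Pi.single a 1)) w]
  rw [Finset.smul_sum]
  refine Finset.sum_congr rfl fun b _ => ?_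
  rw [fderiv_fderiv_single hh]
  simp [smul_eq_mul]; ring

end Aux

section Parts

lemma parts_00 : parts 0 0 = {![]} := by decide
lemma parts_01 : parts 0 1 = ∅ := by decide
lemma parts_02 : parts 0 2 = ∅ := by decide
lemma parts_03 : parts 0 3 = ∅ := by decide
lemma parts_11 : parts 1 1 = {![1]} := by decide
lemma parts_12 : parts 1 2 = {![2]} := by decide
lemma parts_13 : parts 1 3 = {![3]} := by decide
lemma parts_22 : parts 2 2 = {![1,1]} := by decide
lemma parts_23 : parts 2 3 = {![1,2],![2,1]} := by decide
lemma parts_33 : parts 3 3 = {![1,1,1]} := by decide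

end Parts

section Sums

variable {n : ℕ} {M : Type*} [AddCommMonoid M]

lemma sum_fun_one (f : (Fin 1 → Fin n) → M) :
    ∑ b : Fin 1 → Fin n, f b = ∑ c : Fin n, f (fun _ => c) := by
  apply Fintype.sum_equiv (Equiv.funUnique (Fin 1) (Fin n))
  intro b
  congr 1
  funext i
  rw [Subsingleton.elim i default]
  rfl

lemma sum_fun_two (f : (Fin 2 → Fin n) → M) :
    ∑ b : Fin 2 → Fin n, f b = ∑ c : Fin n, ∑ d : Fin n, f ![c, d] := by
  have h : ∑ b : Fin 2 → Fin n, f b = ∑ p : Fin n × Fin n, f ![p.1, p.2] := by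
    apply Fintype.sum_equiv (finTwoArrowEquiv (Fin n))
    intro b
    congr 1
    funext i
    fin_cases i <;> rfl
  rw [h, Fintype.sum_prod_type]

lemma sum_fun_three (f : (Fin 3 → Fin n) → M) :
    ∑ b : Fin 3 → Fin n, f b = ∑ c : Fin n, ∑ d : Fin n, ∑ e : Fin n, f ![c, d, e] := by
  have h : ∑ b : Fin 3 → Fin n, f b = ∑ p : Fin n × Fin n × Fin n, f ![p.1, p.2.1, p.2.2] := by
    apply Fintype.sum_equiv
      (⟨fun b => (b 0, b 1, b 2), fun p => ![p.1, p.2.1, p.2.2],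
        fun b => by funext i; fin_cases i <;> rfl, fun p => rfl⟩ :
        (Fin 3 → Fin n) ≃ Fin n × Fin n × Fin n)
    intro b
    congr 1
    funext i
    fin_cases i <;> rfl
  rw [h, Fintype.sum_prod_type]
  simp only [Fintype.sum_prod_type]

end Sums

section Taylor

variable {m n : ℕ}

lemma taylorComp_zero (h : Fn n) (Y : ℕ → VFn m n) (x : Fin m → ℝ) :
    taylorComp h Y 0 x = h (Y 0 x) := by
  simp [taylorComp, parts_00]

lemma taylorComp_one (h : Fn n) (Y : ℕ → VFn m n) (x : Fin m → ℝ) :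
    taylorComp h Y 1 x = ∑ a, Y 1 x a * pd a h (Y 0 x) := by
  rw [taylorComp, Finset.sum_range_succ, Finset.sum_range_one, parts_01, parts_11]
  simp only [Finset.sum_empty, Finset.sum_singleton, zero_add]
  rw [iteratedFDeriv_one_apply]
  rw [show ((![1] : Fin 1 → Fin 2) 0 : ℕ) = 1 from rfl]
  rw [fderiv_expand]
  simp [Nat.factorial]

lemma taylorComp_two {h : Fn n} (hh : Sm h) (Y : ℕ → VFn m n) (x : Fin m → ℝ) :
    taylorComp h Y 2 x = (∑ a, Y 2 x a * pd a h (Y 0 x))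
      + (2:ℝ)⁻¹ * ∑ a, ∑ b, Y 1 x a * Y 1 x b * pd a (pd b h) (Y 0 x) := by
  rw [taylorComp, Finset.sum_range_succ, Finset.sum_range_succ, Finset.sum_range_one,
    parts_02, parts_12, parts_22]
  simp only [Finset.sum_empty, Finset.sum_singleton, zero_add]
  rw [iteratedFDeriv_one_apply]
  rw [show ((![2] : Fin 1 → Fin 3) 0 : ℕ) = 2 from rfl]
  rw [fderiv_expand]
  rw [iteratedFDeriv_two_apply]
  rw [show ((![1,1] : Fin 2 → Fin 3) 0 : ℕ) = 1 from rfl,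
      show ((![1,1] : Fin 2 → Fin 3) 1 : ℕ) = 1 from rfl]
  rw [fderiv2_expand hh]
  norm_num [Nat.factorial]

end Taylor

section ThickYQ

variable {m n : ℕ}

lemma cons_one_eq {a b : Fin n} : (Fin.cons a (fun _ : Fin 1 => b) : Fin 2 → Fin n) = ![a, b] := by
  funext i
  fin_cases i <;> rfl

lemma thickY_zero (S : GenFn m n) (g : Fn n) : thickY S g 0 = sOne S := rfl

lemma qComp_one (g : Fn n) (Y : ℕ → VFn m n) (c : Fin n) (x : Fin m → ℝ) :
    qComp g Y c 1 x = pd c g (Y 0 x) := taylorComp_zero _ _ _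

lemma qComp_two (g : Fn n) (Y : ℕ → VFn m n) (c : Fin n) (x : Fin m → ℝ) :
    qComp g Y c 2 x = ∑ a, Y 1 x a * pd a (pd c g) (Y 0 x) := taylorComp_one _ _ _

lemma thickY_one (S : GenFn m n) (g : Fn n) (x : Fin m → ℝ) (a : Fin n) :
    thickY S g 1 x a = ∑ b, 2 * S.S 2 x ![a, b] * pd b g (sOne S x) := by
  show dSComp S g (thickYAux S g 0) 1 x a = _
  rw [dSComp]
  rw [Finset.sum_range_succ, Finset.sum_range_one, parts_01, parts_11]
  simp only [Finset.sum_empty, Finset.sum_const_zero, Finset.sum_singleton, zero_add]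
  rw [sum_fun_one]
  refine Finset.sum_congr rfl fun c _ => ?_
  rw [Fin.prod_univ_one]
  rw [show ((![1] : Fin 1 → Fin 2) 0 : ℕ) = 1 from rfl]
  rw [qComp_one]
  rw [show (Fin.cons a (fun _ : Fin 1 => c) : Fin 2 → Fin n) = ![a, c] from cons_one_eq]
  rw [show thickYAux S g 0 0 = sOne S from rfl]
  norm_num

end ThickYQ

section Components

variable {m n : ℕ} (S : GenFn m n) (g : Fn n) (x : Fin m → ℝ)

lemma SqComp_zero : SqComp S g 0 x = S.S 0 x (fun i => i.elim0) := by
  rw [SqComp, Finset.sum_range_one, parts_00]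
  simp only [Finset.sum_singleton]
  rw [Fintype.sum_subsingleton _ (fun i => (i.elim0 : Fin n))]
  simp

lemma SqComp_one : SqComp S g 1 x = ∑ c, S.S 1 x (fun _ => c) * pd c g (sOne S x) := by
  rw [SqComp, Finset.sum_range_succ, Finset.sum_range_one, parts_01, parts_11]
  simp only [Finset.sum_empty, Finset.sum_const_zero, Finset.sum_singleton, zero_add]
  rw [sum_fun_one]
  refine Finset.sum_congr rfl fun c _ => ?_
  rw [Fin.prod_univ_one, show ((![1] : Fin 1 → Fin 2) 0 : ℕ) = 1 from rfl, qComp_one,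
    thickY_zero]

lemma SqComp_two : SqComp S g 2 x =
    (∑ c, S.S 1 x (fun _ => c) * qComp g (thickY S g) c 2 x)
      + ∑ c, ∑ d, S.S 2 x ![c, d] * (pd c g (sOne S x) * pd d g (sOne S x)) := by
  rw [SqComp, Finset.sum_range_succ, Finset.sum_range_succ, Finset.sum_range_one,
    parts_02, parts_12, parts_22]
  simp only [Finset.sum_empty, Finset.sum_const_zero, Finset.sum_singleton, zero_add]
  congr 1
  · rw [sum_fun_one]
    refine Finset.sum_congr rfl fun c _ => ?_
    rw [Fin.prod_univ_one, show ((![2] : Fin 1 → Fin 3) 0 : ℕ) = 2 from rfl]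
  · rw [sum_fun_two]
    refine Finset.sum_congr rfl fun c _ => Finset.sum_congr rfl fun d _ => ?_
    rw [Fin.prod_univ_two,
      show ((![1,1] : Fin 2 → Fin 3) 0 : ℕ) = 1 from rfl,
      show ((![1,1] : Fin 2 → Fin 3) 1 : ℕ) = 1 from rfl,
      show (![c,d] : Fin 2 → Fin n) 0 = c from rfl,
      show (![c,d] : Fin 2 → Fin n) 1 = d from rfl,
      qComp_one, qComp_one, thickY_zero]

lemma SqComp_three : SqComp S g 3 x =
    (∑ c, S.S 1 x (fun _ => c) * qComp g (thickY S g) c 3 x)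
      + (∑ c, ∑ d, S.S 2 x ![c, d] *
          (pd c g (sOne S x) * qComp g (thickY S g) d 2 x
            + qComp g (thickY S g) c 2 x * pd d g (sOne S x)))
      + ∑ c, ∑ d, ∑ e, S.S 3 x ![c, d, e] *
          (pd c g (sOne S x) * pd d g (sOne S x) * pd e g (sOne S x)) := by
  rw [SqComp, Finset.sum_range_succ, Finset.sum_range_succ, Finset.sum_range_succ,
    Finset.sum_range_one, parts_03, parts_13, parts_23, parts_33]
  simp only [Finset.sum_empty, Finset.sum_const_zero, Finset.sum_singleton, zero_add]
  congr 1
  congr 1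
  · rw [sum_fun_one]
    refine Finset.sum_congr rfl fun c _ => ?_
    rw [Fin.prod_univ_one, show ((![3] : Fin 1 → Fin 4) 0 : ℕ) = 3 from rfl]
  · rw [sum_fun_two]
    refine Finset.sum_congr rfl fun c _ => Finset.sum_congr rfl fun d _ => ?_
    rw [Finset.sum_insert (by decide), Finset.sum_singleton, Fin.prod_univ_two,
      Fin.prod_univ_two,
      show ((![1,2] : Fin 2 → Fin 4) 0 : ℕ) = 1 from rfl,
      show ((![1,2] : Fin 2 → Fin 4) 1 : ℕ) = 2 from rfl,
      show ((![2,1] : Fin 2 → Fin 4) 0 : ℕ) = 2 from rfl,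
      show ((![2,1] : Fin 2 → Fin 4) 1 : ℕ) = 1 from rfl,
      show (![c,d] : Fin 2 → Fin n) 0 = c from rfl,
      show (![c,d] : Fin 2 → Fin n) 1 = d from rfl,
      qComp_one, qComp_one, thickY_zero]
    ring
  · rw [sum_fun_three]
    refine Finset.sum_congr rfl fun c _ => Finset.sum_congr rfl fun d _ =>
      Finset.sum_congr rfl fun e _ => ?_
    rw [Fin.prod_univ_three,
      show ((![1,1,1] : Fin 3 → Fin 4) 0 : ℕ) = 1 from rfl,
      show ((![1,1,1] : Fin 3 → Fin 4) 1 : ℕ) = 1 from rfl,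
      show ((![1,1,1] : Fin 3 → Fin 4) 2 : ℕ) = 1 from rfl,
      show (![c,d,e] : Fin 3 → Fin n) 0 = c from rfl,
      show (![c,d,e] : Fin 3 → Fin n) 1 = d from rfl,
      show (![c,d,e] : Fin 3 → Fin n) 2 = e from rfl,
      qComp_one, qComp_one, qComp_one, thickY_zero]

lemma yqComp_zero : yqComp S g 0 x = 0 := by
  simp [yqComp]

lemma yqComp_one : yqComp S g 1 x = ∑ c, S.S 1 x (fun _ => c) * pd c g (sOne S x) := by
  rw [yqComp]
  refine Finset.sum_congr rfl fun c _ => ?_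
  rw [show Finset.Icc 1 1 = ({1} : Finset ℕ) from rfl, Finset.sum_singleton, qComp_one,
    thickY_zero]
  rfl

lemma yqComp_two : yqComp S g 2 x =
    ∑ c, (thickY S g 1 x c * pd c g (sOne S x)
      + S.S 1 x (fun _ => c) * qComp g (thickY S g) c 2 x) := by
  rw [yqComp]
  refine Finset.sum_congr rfl fun c _ => ?_
  rw [show Finset.Icc 1 2 = ({1, 2} : Finset ℕ) from rfl,
    Finset.sum_insert (by decide), Finset.sum_singleton, qComp_one, thickY_zero]
  rfl

lemma yqComp_three : yqComp S g 3 x =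
    ∑ c, (thickY S g 2 x c * pd c g (sOne S x)
      + thickY S g 1 x c * qComp g (thickY S g) c 2 x
      + S.S 1 x (fun _ => c) * qComp g (thickY S g) c 3 x) := by
  rw [yqComp]
  refine Finset.sum_congr rfl fun c _ => ?_
  rw [show Finset.Icc 1 3 = ({1, 2, 3} : Finset ℕ) from rfl,
    Finset.sum_insert (by decide), Finset.sum_insert (by decide), Finset.sum_singleton,
    qComp_one, thickY_zero]
  rw [show sOne S x c = S.S 1 x (fun _ => c) from rfl]
  ring

end Components

section KeyAlg

variable {n : ℕ}

lemma sum4_collapse {M : Type*} [AddCommMonoid M] (F : Fin n → Fin n → Fin n → Fin n → M) :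
    ∑ p : Fin n × Fin n × Fin n × Fin n, F p.1 p.2.1 p.2.2.1 p.2.2.2
      = ∑ a, ∑ b, ∑ c, ∑ d, F a b c d := by
  simp only [Fintype.sum_prod_type]

lemma sum4_congr (F G : Fin n → Fin n → Fin n → Fin n → ℝ)
    (h : ∀ a b c d, F a b c d = G a b c d) :
    (∑ a, ∑ b, ∑ c, ∑ d, F a b c d) = ∑ a, ∑ b, ∑ c, ∑ d, G a b c d :=
  Finset.sum_congr rfl fun a _ => Finset.sum_congr rfl fun b _ =>
    Finset.sum_congr rfl fun c _ => Finset.sum_congr rfl fun d _ => h a b c d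

lemma sum4_R1 (v : Fin n → Fin n → Fin n → Fin n → ℝ) :
    (∑ w, ∑ x, ∑ y, ∑ z, v y w z x) = ∑ a, ∑ b, ∑ c, ∑ d, v a b c d := by
  rw [← sum4_collapse (fun w x y z => v y w z x), ← sum4_collapse v]
  exact Fintype.sum_equiv
    ⟨fun q => (q.2.2.1, q.1, q.2.2.2, q.2.1), fun p => (p.2.1, p.2.2.2, p.1, p.2.2.1),
      fun q => rfl, fun p => rfl⟩ _ _ (fun q => rfl)

lemma sum4_R2 (v : Fin n → Fin n → Fin n → Fin n → ℝ) :
    (∑ w, ∑ x, ∑ y, ∑ z, v y x z w) = ∑ a, ∑ b, ∑ c, ∑ d, v a b c d := by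
  rw [← sum4_collapse (fun w x y z => v y x z w), ← sum4_collapse v]
  exact Fintype.sum_equiv
    ⟨fun q => (q.2.2.1, q.2.1, q.2.2.2, q.1), fun p => (p.2.2.2, p.2.1, p.1, p.2.2.1),
      fun q => rfl, fun p => rfl⟩ _ _ (fun q => rfl)

lemma key_alg (S2 : Fin n → Fin n → ℝ) (G : Fin n → ℝ) (H : Fin n → Fin n → ℝ)
    (hS2 : ∀ a b, S2 a b = S2 b a) :
    (2:ℝ)⁻¹ * (∑ a, ∑ b, (∑ c, 2 * S2 a c * G c) * (∑ d, 2 * S2 b d * G d) * H a b)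
      + (∑ c, ∑ d, S2 c d *
          (G c * (∑ e, (∑ f, 2 * S2 e f * G f) * H e d)
            + (∑ e, (∑ f, 2 * S2 e f * G f) * H e c) * G d))
      - (∑ a, (∑ b, 2 * S2 a b * G b) * (∑ e, (∑ f, 2 * S2 e f * G f) * H e a))
    = ∑ a, ∑ b, ∑ c, ∑ d, 2 * S2 a c * S2 b d * H a b * G c * G d := by
  have P1 : (∑ a, ∑ b, (∑ c, 2 * S2 a c * G c) * (∑ d, 2 * S2 b d * G d) * H a b)
      = ∑ a, ∑ b, ∑ c, ∑ d, 4 * (S2 a c * S2 b d * H a b * G c * G d) := by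
    refine Finset.sum_congr rfl fun a _ => Finset.sum_congr rfl fun b _ => ?_
    rw [Finset.sum_mul_sum, Finset.sum_mul]
    refine Finset.sum_congr rfl fun c _ => ?_
    rw [Finset.sum_mul]
    exact Finset.sum_congr rfl fun d _ => by ring
  have P2 : (∑ a, (∑ b, 2 * S2 a b * G b) * (∑ e, (∑ f, 2 * S2 e f * G f) * H e a))
      = ∑ a, ∑ b, ∑ e, ∑ f, 4 * (S2 e f * S2 a b * H e a * G f * G b) := by
    refine Finset.sum_congr rfl fun a _ => ?_
    rw [Finset.sum_mul_sum]
    refine Finset.sum_congr rfl fun b _ => Finset.sum_congr rfl fun e _ => ?_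
    rw [Finset.sum_mul, Finset.mul_sum]
    exact Finset.sum_congr rfl fun f _ => by ring
  have P3 : (∑ c, ∑ d, S2 c d *
        (G c * (∑ e, (∑ f, 2 * S2 e f * G f) * H e d)
          + (∑ e, (∑ f, 2 * S2 e f * G f) * H e c) * G d))
      = (∑ c, ∑ d, ∑ e, ∑ f, 2 * (S2 c d * S2 e f * H e d * G c * G f))
        + ∑ c, ∑ d, ∑ e, ∑ f, 2 * (S2 c d * S2 e f * H e c * G f * G d) := by
    rw [← Finset.sum_add_distrib]
    refine Finset.sum_congr rfl fun c _ => ?_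
    rw [← Finset.sum_add_distrib]
    refine Finset.sum_congr rfl fun d _ => ?_
    rw [mul_add]
    congr 1
    · rw [Finset.mul_sum, Finset.mul_sum]
      refine Finset.sum_congr rfl fun e _ => ?_
      rw [Finset.sum_mul, Finset.mul_sum, Finset.mul_sum]
      exact Finset.sum_congr rfl fun f _ => by ring
    · rw [Finset.sum_mul, Finset.mul_sum]
      refine Finset.sum_congr rfl fun e _ => ?_
      rw [Finset.sum_mul, Finset.sum_mul, Finset.mul_sum]
      exact Finset.sum_congr rfl fun f _ => by ring
  have Q2 : (∑ a, ∑ b, ∑ e, ∑ f, 4 * (S2 e f * S2 a b * H e a * G f * G b))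
      = ∑ a, ∑ b, ∑ c, ∑ d, 4 * (S2 a c * S2 b d * H a b * G c * G d) :=
    sum4_R1 (fun p q r s => 4 * (S2 p r * S2 q s * H p q * G r * G s))
  have Q3a : (∑ c, ∑ d, ∑ e, ∑ f, 2 * (S2 c d * S2 e f * H e d * G c * G f))
      = ∑ a, ∑ b, ∑ c, ∑ d, 2 * (S2 a c * S2 b d * H a b * G c * G d) := by
    rw [← sum4_R2 (fun p q r s => 2 * (S2 p r * S2 q s * H p q * G r * G s))]
    exact sum4_congr _ _ fun c d e f => by rw [hS2 c d]; ring
  have Q3b : (∑ c, ∑ d, ∑ e, ∑ f, 2 * (S2 c d * S2 e f * H e c * G f * G d))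
      = ∑ a, ∑ b, ∑ c, ∑ d, 2 * (S2 a c * S2 b d * H a b * G c * G d) := by
    rw [← sum4_R1 (fun p q r s => 2 * (S2 p r * S2 q s * H p q * G r * G s))]
    exact sum4_congr _ _ fun c d e f => by ring
  have RT : (∑ a, ∑ b, ∑ c, ∑ d, 2 * S2 a c * S2 b d * H a b * G c * G d)
      = ∑ a, ∑ b, ∑ c, ∑ d, 2 * (S2 a c * S2 b d * H a b * G c * G d) :=
    sum4_congr _ _ fun a b c d => by ring
  have PULL1 : (∑ a, ∑ b, ∑ c, ∑ d, 4 * (S2 a c * S2 b d * H a b * G c * G d))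
      = 2 * ∑ a, ∑ b, ∑ c, ∑ d, 2 * (S2 a c * S2 b d * H a b * G c * G d) := by
    simp only [← Finset.mul_sum]
    ring
  rw [P1, P2, P3, Q2, Q3a, Q3b, RT, PULL1]
  ring

end KeyAlg

section Assemble

variable {m n : ℕ} (S : GenFn m n) (g : Fn n) (x : Fin m → ℝ)

lemma thickPull_zero : thickPull S g 0 x = S.S 0 x (fun i => i.elim0) := by
  simp only [thickPull, if_pos rfl, if_true]
  rw [SqComp_zero, yqComp_zero]
  simp

lemma thickPull_one : thickPull S g 1 x = g (sOne S x) := by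
  simp only [thickPull, if_neg (by decide : ¬(1 = 0))]
  rw [show (1:ℕ) - 1 = 0 from rfl, taylorComp_zero, thickY_zero, SqComp_one, yqComp_one]
  ring

lemma thickPull_two : thickPull S g 2 x =
    ∑ a, ∑ b, S.S 2 x ![a, b] * pd a g (sOne S x) * pd b g (sOne S x) := by
  simp only [thickPull, if_neg (by decide : ¬(2 = 0))]
  rw [show (2:ℕ) - 1 = 1 from rfl, taylorComp_one, thickY_zero, SqComp_two, yqComp_two,
    Finset.sum_add_distrib]
  have hC : (∑ c, ∑ d, S.S 2 x ![c, d] * (pd c g (sOne S x) * pd d g (sOne S x)))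
      = ∑ a, ∑ b, S.S 2 x ![a, b] * pd a g (sOne S x) * pd b g (sOne S x) :=
    Finset.sum_congr rfl fun c _ => Finset.sum_congr rfl fun d _ => by ring
  rw [hC]
  ring

lemma thickPull_three (hg : Sm g) : thickPull S g 3 x =
    (∑ a, ∑ b, ∑ c, S.S 3 x ![a, b, c] * pd a g (sOne S x) * pd b g (sOne S x)
        * pd c g (sOne S x))
      + ∑ a, ∑ b, ∑ c, ∑ d, 2 * S.S 2 x ![a, c] * S.S 2 x ![b, d] *
          pd a (pd b g) (sOne S x) * pd c g (sOne S x) * pd d g (sOne S x) := by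
  have hS2 : ∀ a b : Fin n, S.S 2 x ![a, b] = S.S 2 x ![b, a] := by
    intro a b
    have h := S.symm 2 (Equiv.swap 0 1) x ![b, a]
    rw [← h]
    congr 1
    funext i
    fin_cases i <;> simp
  simp only [thickPull, if_neg (by decide : ¬(3 = 0))]
  rw [show (3:ℕ) - 1 = 2 from rfl, taylorComp_two hg, SqComp_three, yqComp_three,
    Finset.sum_add_distrib, Finset.sum_add_distrib]
  simp only [qComp_two, thickY_zero, thickY_one]
  have halg := key_alg (fun a b => S.S 2 x ![a, b]) (fun c => pd c g (sOne S x))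
    (fun a b => pd a (pd b g) (sOne S x)) hS2
  beta_reduce at halg
  have hB3 : (∑ c, ∑ d, ∑ e, S.S 3 x ![c, d, e] *
        (pd c g (sOne S x) * pd d g (sOne S x) * pd e g (sOne S x)))
      = ∑ a, ∑ b, ∑ c, S.S 3 x ![a, b, c] * pd a g (sOne S x) * pd b g (sOne S x)
          * pd c g (sOne S x) :=
    Finset.sum_congr rfl fun c _ => Finset.sum_congr rfl fun d _ =>
      Finset.sum_congr rfl fun e _ => by ring
  linear_combination halg + hB3

end Assemble
/-- The components of order `≤ 3` of the thick-morphism pull-back: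
`[Φ_S^*(g)]_0 = S_0(x)`, `[Φ_S^*(g)]_1 = g(S_1(x))`,
`[Φ_S^*(g)]_2 = S_2^{ab}(x) g*_a(x) g*_b(x)`, and
`[Φ_S^*(g)]_3 = S_3^{abc} g*_a g*_b g*_c + 2 S_2^{ac} S_2^{bd} g*_{ab} g*_c g*_d`,
where `g*_a(x) = (∂_a g)(S_1(x))` and `g*_{ab}(x) = (∂_a ∂_b g)(S_1(x))`. -/
theorem thickPull_components {m n : ℕ} (S : GenFn m n) (g : Fn n) (hg : Sm g)
    (x : Fin m → ℝ) :
    thickPull S g 0 x = S.S 0 x (fun i => i.elim0)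
    ∧ thickPull S g 1 x = g (sOne S x)
    ∧ thickPull S g 2 x =
        ∑ a : Fin n, ∑ b : Fin n, S.S 2 x ![a, b] * pd a g (sOne S x) * pd b g (sOne S x)
    ∧ thickPull S g 3 x =
        (∑ a : Fin n, ∑ b : Fin n, ∑ c : Fin n,
          S.S 3 x ![a, b, c] * pd a g (sOne S x) * pd b g (sOne S x) * pd c g (sOne S x))
        + ∑ a : Fin n, ∑ b : Fin n, ∑ c : Fin n, ∑ d : Fin n,
            2 * S.S 2 x ![a, c] * S.S 2 x ![b, d] *
              pd a (pd b g) (sOne S x) * pd c g (sOne S x) * pd d g (sOne S x) := by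
  exact ⟨thickPull_zero S g x, thickPull_one S g x, thickPull_two S g x,
    thickPull_three S g x hg⟩

end ThickMorphism
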